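/- For every positive integer m, every real number a, and every natural number n, the integral of the noncentral Tanny-Dowling polynomial over the interval [-1,0] satisfies ∫_{-1}^{0} F̃_{m,a}(n; m·x) dx = m^n · B_n(-a/m), where B_n denotes the n-th Bernoulli polynomial. -/

import Mathlib

open Finset MeasureTheory

/-- Noncentral Whitney numbers of the second kind:
`W̃_{m,a}(n,k) = (1/(m^k k!)) Σ_{j=0}^{k} (-1)^{k-j} C(k,j) (m j - a)^n`. -/
noncomputable def ncWhitney (m : ℕ) (a : ℝ) (n k : ℕ) : ℝ :=
  (1 / ((m : ℝ) ^ k * (Nat.factorial k : ℝ))) *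
    ∑ j ∈ Finset.range (k + 1),
      (-1 : ℝ) ^ (k - j) * (Nat.choose k j : ℝ) * ((m : ℝ) * (j : ℝ) - a) ^ n

/-- Noncentral Tanny-Dowling polynomials:
`F̃_{m,a}(n;x) = Σ_{k=0}^{n} k! W̃_{m,a}(n,k) x^k`. -/
noncomputable def ncTannyDowling (m : ℕ) (a : ℝ) (n : ℕ) (x : ℝ) : ℝ :=
  ∑ k ∈ Finset.range (n + 1), (Nat.factorial k : ℝ) * ncWhitney m a n k * x ^ k

/-- Noncentral Dowling polynomials:
`D̃_{m,a}(n;x) = Σ_{k=0}^{n} W̃_{m,a}(n,k) x^k`. -/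
noncomputable def ncDowling (m : ℕ) (a : ℝ) (n : ℕ) (x : ℝ) : ℝ :=
  ∑ k ∈ Finset.range (n + 1), ncWhitney m a n k * x ^ k

section AuxBernoulli
open Polynomial


noncomputable def binPoly (k : ℕ) : ℝ[X] :=
  C (((Nat.factorial k : ℝ))⁻¹) * ∏ i ∈ range k, (X - C (i : ℝ))

lemma binPoly_eval (s k : ℕ) : (binPoly k).eval (s : ℝ) = (s.choose k : ℝ) := by
  have h1 : ∏ i ∈ range k, ((s : ℝ) - (i : ℝ)) = (s.descFactorial k : ℝ) := by
    induction k with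
    | zero => simp
    | succ k ih =>
      rw [prod_range_succ, ih]
      rcases le_or_gt (k + 1) s with h | h
      · rw [Nat.descFactorial_succ, Nat.cast_mul, Nat.cast_sub (by omega)]
        ring
      · rw [Nat.descFactorial_of_lt h]
        rcases lt_or_eq_of_le (Nat.lt_succ_iff.mp h) with h2 | h2
        · rw [Nat.descFactorial_of_lt h2]; simp
        · simp [h2]
  simp only [binPoly, eval_mul, eval_C, eval_prod, eval_sub, eval_X, h1,
    Nat.descFactorial_eq_factorial_mul_choose]
  push_cast
  rw [mul_comm]
  field_simp

lemma binPoly_degree (k : ℕ) : (binPoly k).degree ≤ k := by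
  refine le_trans (degree_mul_le _ _) ?_
  refine le_trans (add_le_add degree_C_le (degree_prod_le _ _)) ?_
  simp only [zero_add]
  refine le_trans (Finset.sum_le_sum (fun i _ => degree_X_sub_C_le _)) ?_
  simp [Finset.sum_const, card_range]


lemma aux_deriv_prod_zero : ∀ k : ℕ, 0 < k →
    (derivative (∏ i ∈ range k, (X - C (i : ℝ)))).eval 0
      = (-1 : ℝ) ^ (k - 1) * (Nat.factorial (k - 1) : ℝ) := by
  intro k
  induction k with
  | zero => omega
  | succ k ih =>
    intro _
    rcases Nat.eq_zero_or_pos k with rfl | hk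
    · simp
    obtain ⟨k', rfl⟩ : ∃ k', k = k' + 1 := ⟨k - 1, by omega⟩
    rw [prod_range_succ, derivative_mul, eval_add, eval_mul, eval_mul, ih hk]
    have h0 : (∏ i ∈ range (k' + 1), (X - C (i : ℝ))).eval 0 = 0 := by
      rw [eval_prod]
      exact Finset.prod_eq_zero (Finset.mem_range.mpr hk) (by simp)
    rw [h0]
    simp only [derivative_sub, derivative_X, derivative_C, sub_zero, eval_one, mul_one, zero_mul,
      add_zero, eval_sub, eval_X, eval_C, zero_sub, Nat.add_sub_cancel, Nat.factorial_succ]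
    push_cast
    ring

lemma binPoly_deriv_zero (k : ℕ) :
    (derivative (binPoly k)).eval 0 = if k = 0 then 0 else (-1 : ℝ) ^ (k - 1) / k := by
  rcases Nat.eq_zero_or_pos k with rfl | hk
  · simp [binPoly]
  rw [if_neg hk.ne']
  obtain ⟨k', rfl⟩ : ∃ k', k = k' + 1 := ⟨k - 1, by omega⟩
  simp only [binPoly, derivative_mul, derivative_C, zero_mul, zero_add, eval_mul, eval_C,
    aux_deriv_prod_zero _ hk, Nat.add_sub_cancel, Nat.factorial_succ]
  have hkf : (Nat.factorial k' : ℝ) ≠ 0 := Nat.cast_ne_zero.mpr (Nat.factorial_ne_zero _)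
  have hk0 : ((k' : ℝ) + 1) ≠ 0 := by positivity
  push_cast
  field_simp


lemma newton_poly (n M : ℕ) (hnM : n ≤ M) (y : ℝ) :
    (∑ k ∈ range (M + 1), C ((fwdDiff 1)^[k] (fun t : ℝ => t ^ n) y) * binPoly k)
      = (C y + X) ^ n := by
  apply Polynomial.eq_of_degrees_lt_of_eval_index_eq (v := (Nat.cast : ℕ → ℝ)) (range (M + 1))
    (Nat.cast_injective.injOn)
  · rw [Finset.card_range]
    refine lt_of_le_of_lt (degree_sum_le _ _) ?_
    rw [Finset.sup_lt_iff (by exact_mod_cast WithBot.bot_lt_coe (M + 1))]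
    intro k hk
    refine lt_of_le_of_lt (degree_mul_le _ _) ?_
    refine lt_of_le_of_lt (add_le_add degree_C_le (binPoly_degree k)) ?_
    rw [zero_add]
    exact_mod_cast WithBot.coe_lt_coe.mpr (Finset.mem_range.mp hk)
  · rw [Finset.card_range]
    have hnd : ((C y + X) ^ n).natDegree ≤ M := by
      rw [add_comm, natDegree_pow, natDegree_X_add_C, mul_one]
      exact hnM
    calc ((C y + X) ^ n).degree ≤ (((C y + X) ^ n).natDegree : WithBot ℕ) := degree_le_natDegree
      _ < ((M + 1 : ℕ) : WithBot ℕ) := by exact_mod_cast Nat.lt_succ_of_le hnd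
  · intro s hs
    rw [Finset.mem_range] at hs
    rw [eval_finset_sum]
    simp only [eval_mul, eval_C, binPoly_eval]
    have hnew := shift_eq_sum_fwdDiff_iter (1 : ℝ) (fun t : ℝ => t ^ n) s y
    have hsmul : y + (s : ℕ) • (1 : ℝ) = y + s := by simp
    rw [hsmul] at hnew
    have hext : ∑ k ∈ range (M + 1), (fwdDiff 1)^[k] (fun t : ℝ => t ^ n) y * (s.choose k : ℝ)
        = ∑ k ∈ range (s + 1), (fwdDiff 1)^[k] (fun t : ℝ => t ^ n) y * (s.choose k : ℝ) := by
      refine (Finset.sum_subset (by intro x hx; rw [Finset.mem_range] at *; omega) ?_).symm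
      intro k hk1 hk2
      rw [Finset.mem_range] at hk1 hk2
      rw [Nat.choose_eq_zero_of_lt (by omega)]
      simp
    rw [hext]
    rw [eval_pow, eval_add, eval_C, eval_X, hnew]
    apply Finset.sum_congr rfl
    intro k _
    rw [nsmul_eq_mul, mul_comm]

lemma claimA (n M : ℕ) (hnM : n ≤ M) (y : ℝ) :
    ∑ k ∈ range M, ((-1 : ℝ) ^ k / (k + 1)) * (fwdDiff 1)^[k + 1] (fun t : ℝ => t ^ n) y
      = n * y ^ (n - 1) := by
  have h := congrArg (fun p => (derivative p).eval 0) (newton_poly n M hnM y)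
  simp only [derivative_sum, derivative_mul, derivative_C, zero_mul, zero_add,
    eval_finset_sum, eval_mul, eval_C, binPoly_deriv_zero, derivative_pow, derivative_add,
    derivative_X, add_zero, eval_pow, eval_add, eval_X, mul_one] at h
  rw [Finset.sum_range_succ'] at h
  simp only [if_true, mul_zero, add_zero, Nat.succ_ne_zero, if_false] at h
  rw [← h]
  apply Finset.sum_congr rfl
  intro k _
  simp only [Nat.add_sub_cancel]
  push_cast
  ring


/-- `T n y = Σ_{k=0}^{n} ((-1)^k/(k+1)) Δ^k (t↦t^n) y`. -/
noncomputable def Tfun (n : ℕ) (y : ℝ) : ℝ :=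
  ∑ k ∈ range (n + 1), ((-1 : ℝ) ^ k / (k + 1)) * (fwdDiff 1)^[k] (fun t : ℝ => t ^ n) y

lemma Tfun_diff (n : ℕ) (y : ℝ) : Tfun n (y + 1) - Tfun n y = n * y ^ (n - 1) := by
  rw [Tfun, Tfun, ← Finset.sum_sub_distrib]
  rw [← claimA n (n + 1) (Nat.le_succ n) y]
  apply Finset.sum_congr rfl
  intro k _
  rw [Function.iterate_succ_apply', fwdDiff]
  ring

lemma bernoulli_comp (n : ℕ) :
    (Polynomial.bernoulli n).comp (1 + X) =
      Polynomial.bernoulli n + (n : ℚ[X]) * X ^ (n - 1) := by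
  apply Polynomial.funext
  intro x
  rw [eval_comp]
  simp [Polynomial.bernoulli_eval_one_add]

lemma Q_diff (n : ℕ) (y : ℝ) :
    (Polynomial.aeval (y + 1)) (Polynomial.bernoulli n)
      = (Polynomial.aeval y) (Polynomial.bernoulli n) + n * y ^ (n - 1) := by
  have h := congrArg (Polynomial.aeval y (R := ℚ) (A := ℝ)) (bernoulli_comp n)
  rw [aeval_comp] at h
  simp only [map_add, map_mul, map_pow, aeval_X, aeval_one, map_natCast] at h
  rw [add_comm 1 y] at h
  exact h


/-- Polynomial whose evaluation is `Tfun n`. -/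
noncomputable def TP (n : ℕ) : ℝ[X] :=
  ∑ k ∈ range (n + 1), C ((-1 : ℝ) ^ k / (k + 1)) *
    ∑ j ∈ range (k + 1), C ((-1 : ℝ) ^ (k - j) * (Nat.choose k j : ℝ)) * (X + C (j : ℝ)) ^ n

lemma fwdDiff_iter_pow_eq (n k : ℕ) (y : ℝ) :
    (fwdDiff 1)^[k] (fun t : ℝ => t ^ n) y
      = ∑ j ∈ range (k + 1), (-1 : ℝ) ^ (k - j) * (Nat.choose k j : ℝ) * (y + j) ^ n := by
  rw [fwdDiff_iter_eq_sum_shift]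
  apply Finset.sum_congr rfl
  intro j _
  rw [zsmul_eq_mul]
  simp only [nsmul_eq_mul, mul_one]
  push_cast
  ring

lemma TP_eval (n : ℕ) (y : ℝ) : (TP n).eval y = Tfun n y := by
  rw [TP, Tfun, eval_finset_sum]
  apply Finset.sum_congr rfl
  intro k _
  rw [eval_mul, eval_C, eval_finset_sum, fwdDiff_iter_pow_eq]
  congr 1
  apply Finset.sum_congr rfl
  intro j _
  simp [eval_mul, eval_pow]


lemma Tint (n : ℕ) (hn : 1 ≤ n) : ∫ y in (0:ℝ)..1, Tfun n y = 0 := by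
  have h1 : ∀ y : ℝ, Tfun n y = ∑ k ∈ range (n + 1), ∑ j ∈ range (k + 1),
      ((-1 : ℝ) ^ k / (k + 1)) * ((-1 : ℝ) ^ (k - j) * (Nat.choose k j : ℝ)) * (y + j) ^ n := by
    intro y
    rw [Tfun]
    apply Finset.sum_congr rfl
    intro k _
    rw [fwdDiff_iter_pow_eq, Finset.mul_sum]
    apply Finset.sum_congr rfl
    intro j _
    ring
  rw [intervalIntegral.integral_congr (fun y _ => h1 y)]
  rw [intervalIntegral.integral_finset_sum (fun k _ => ?_)]
  swap
  · apply Continuous.intervalIntegrable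
    exact continuous_finset_sum _ (fun j _ => by continuity)
  have h2 : ∀ k ∈ range (n + 1), (∫ y in (0:ℝ)..1, ∑ j ∈ range (k + 1),
      ((-1 : ℝ) ^ k / (k + 1)) * ((-1 : ℝ) ^ (k - j) * (Nat.choose k j : ℝ)) * (y + j) ^ n)
      = ((-1 : ℝ) ^ k / (k + 1)) * ((1 : ℝ) / (n + 1))
        * (fwdDiff 1)^[k + 1] (fun t : ℝ => t ^ (n + 1)) 0 := by
    intro k _
    rw [intervalIntegral.integral_finset_sum (fun j _ => by
      apply Continuous.intervalIntegrable; continuity)]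
    have hint : ∀ j : ℕ, (∫ y in (0:ℝ)..1, (y + (j : ℝ)) ^ n)
        = (((j : ℝ) + 1) ^ (n + 1) - (j : ℝ) ^ (n + 1)) / (n + 1) := by
      intro j
      rw [intervalIntegral.integral_comp_add_right (fun x => x ^ n) (j : ℝ)]
      rw [integral_pow]
      norm_num [add_comm]
    have h3 : (fwdDiff 1)^[k + 1] (fun t : ℝ => t ^ (n + 1)) 0
        = ∑ j ∈ range (k + 1), (-1 : ℝ) ^ (k - j) * (Nat.choose k j : ℝ)
            * (((j : ℝ) + 1) ^ (n + 1) - (j : ℝ) ^ (n + 1)) := by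
      rw [Function.iterate_succ_apply, fwdDiff_iter_eq_sum_shift]
      apply Finset.sum_congr rfl
      intro j _
      rw [zsmul_eq_mul, fwdDiff]
      simp only [nsmul_eq_mul, mul_one, zero_add]
      push_cast
      ring
    rw [h3, Finset.mul_sum]
    apply Finset.sum_congr rfl
    intro j _
    rw [intervalIntegral.integral_const_mul, hint j]
    field_simp
  rw [Finset.sum_congr rfl h2]
  have h4 : ∑ k ∈ range (n + 1), ((-1 : ℝ) ^ k / (k + 1)) * ((1 : ℝ) / (n + 1))
      * (fwdDiff 1)^[k + 1] (fun t : ℝ => t ^ (n + 1)) 0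
      = ((1 : ℝ) / (n + 1)) * ∑ k ∈ range (n + 1), ((-1 : ℝ) ^ k / (k + 1))
          * (fwdDiff 1)^[k + 1] (fun t : ℝ => t ^ (n + 1)) 0 := by
    rw [Finset.mul_sum]
    apply Finset.sum_congr rfl
    intro k _
    ring
  rw [h4, claimA (n + 1) (n + 1) le_rfl 0]
  rw [zero_pow (by omega : n + 1 - 1 ≠ 0)]
  ring


lemma Qint (n : ℕ) (hn : 1 ≤ n) :
    ∫ y in (0:ℝ)..1, (Polynomial.aeval y (Polynomial.bernoulli n) : ℝ) = 0 := by
  set q : ℝ[X] := (Polynomial.bernoulli (n + 1)).map (algebraMap ℚ ℝ) with hq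
  have hderiv : ∀ y : ℝ, HasDerivAt (fun x => q.eval x)
      (((n : ℝ) + 1) * Polynomial.aeval y (Polynomial.bernoulli n)) y := by
    intro y
    have h := q.hasDerivAt y
    have hd : derivative q = ((n : ℚ[X]) + 1).map (algebraMap ℚ ℝ)
        * (Polynomial.bernoulli n).map (algebraMap ℚ ℝ) := by
      rw [hq, derivative_map, Polynomial.derivative_bernoulli_add_one, Polynomial.map_mul]
    rw [hd] at h
    refine h.congr_deriv ?_
    symm
    rw [eval_mul]
    congr 1
    · simp [Polynomial.eval_map, Polynomial.eval₂_at_apply]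
    · rw [Polynomial.eval_map, ← Polynomial.aeval_def]
  have hint : IntervalIntegrable
      (fun y : ℝ => ((n : ℝ) + 1) * Polynomial.aeval y (Polynomial.bernoulli n)) MeasureTheory.volume 0 1 := by
    apply Continuous.intervalIntegrable
    have : (fun y : ℝ => Polynomial.aeval y (Polynomial.bernoulli n))
        = fun y : ℝ => ((Polynomial.bernoulli n).map (algebraMap ℚ ℝ)).eval y := by
      funext y
      rw [Polynomial.eval_map, ← Polynomial.aeval_def]
    have hc : Continuous fun y : ℝ => Polynomial.aeval y (Polynomial.bernoulli n) := by
      rw [this]; exact Polynomial.continuous _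
    exact continuous_const.mul hc
  have key := intervalIntegral.integral_eq_sub_of_hasDerivAt
    (fun y _ => hderiv y) hint
  rw [intervalIntegral.integral_const_mul] at key
  have hval : q.eval 1 = q.eval 0 := by
    rw [hq, Polynomial.eval_map, Polynomial.eval_map, Polynomial.eval₂_at_one,
      Polynomial.eval₂_at_zero]
    rw [Polynomial.bernoulli_eval_one]
    rw [Polynomial.coeff_zero_eq_eval_zero, Polynomial.bernoulli_eval_zero,
      _root_.bernoulli_eq_bernoulli'_of_ne_one (by omega)]
  rw [hval, sub_self] at key
  have hne : ((n : ℝ) + 1) ≠ 0 := by positivity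
  exact (mul_eq_zero.mp key).resolve_left hne


lemma Tfun_eq_bernoulli (n : ℕ) (y : ℝ) :
    Tfun n y = Polynomial.aeval y (Polynomial.bernoulli n) := by
  rcases Nat.eq_zero_or_pos n with rfl | hn
  · simp [Tfun, Polynomial.bernoulli_zero]
  have hφeval : ∀ y : ℝ, ((Polynomial.bernoulli n).map (algebraMap ℚ ℝ)).eval y
      = Polynomial.aeval y (Polynomial.bernoulli n) := fun y => by
    rw [Polynomial.eval_map, ← Polynomial.aeval_def]
  set D : ℝ[X] := TP n - (Polynomial.bernoulli n).map (algebraMap ℚ ℝ) with hDdef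
  have hDeval : ∀ y : ℝ, D.eval y = Tfun n y - Polynomial.aeval y (Polynomial.bernoulli n) := by
    intro y
    rw [hDdef, eval_sub, TP_eval, hφeval]
  have hper : ∀ y : ℝ, D.eval (y + 1) = D.eval y := by
    intro y
    rw [hDeval, hDeval]
    have h1 := Tfun_diff n y
    have h2 := Q_diff n y
    linarith
  have hnat : ∀ N : ℕ, D.eval (N : ℝ) = D.eval 0 := by
    intro N
    induction N with
    | zero => norm_num
    | succ N ih =>
      push_cast
      rw [hper, ih]
  have hD : D - C (D.eval 0) = 0 := by
    apply Polynomial.eq_zero_of_infinite_isRoot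
    apply Set.Infinite.mono ?_
      (Set.infinite_range_of_injective (Nat.cast_injective : Function.Injective (Nat.cast : ℕ → ℝ)))
    rintro x ⟨N, rfl⟩
    simp only [Set.mem_setOf_eq, IsRoot, eval_sub, eval_C, hnat N, sub_self]
  have hc : ∀ y : ℝ, Tfun n y - Polynomial.aeval y (Polynomial.bernoulli n) = D.eval 0 := by
    intro y
    rw [← hDeval]
    have := congrArg (eval y) (sub_eq_zero.mp hD ▸ rfl : D = C (D.eval 0))
    rw [this, eval_C]
  have hTcont : Continuous (Tfun n) := by
    have : Tfun n = fun y => (TP n).eval y := funext fun y => (TP_eval n y).symm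
    rw [this]
    exact Polynomial.continuous _
  have hQcont : Continuous fun y : ℝ => Polynomial.aeval y (Polynomial.bernoulli n) := by
    have : (fun y : ℝ => Polynomial.aeval y (Polynomial.bernoulli n))
        = fun y => ((Polynomial.bernoulli n).map (algebraMap ℚ ℝ)).eval y :=
      funext fun y => (hφeval y).symm
    rw [this]
    exact Polynomial.continuous _
  have hzero : D.eval 0 = 0 := by
    have hInt : ∫ y in (0:ℝ)..1, (Tfun n y - Polynomial.aeval y (Polynomial.bernoulli n))
        = ∫ y in (0:ℝ)..1, (D.eval 0 : ℝ) :=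
      intervalIntegral.integral_congr (fun y _ => hc y)
    rw [intervalIntegral.integral_sub (hTcont.intervalIntegrable 0 1) (hQcont.intervalIntegrable 0 1),
      Tint n hn, Qint n hn, intervalIntegral.integral_const] at hInt
    simpa using hInt.symm
  have := hc y
  rw [hzero] at this
  linarith

end AuxBernoulli

/-- `∫_{-1}^{0} F̃_{m,a}(n; m x) dx = m^n B_n(-a/m)`. -/
theorem integral_ncTannyDowling_eq_bernoulli (m : ℕ) (hm : 0 < m) (a : ℝ) (n : ℕ) :
    ∫ x in (-1 : ℝ)..0, ncTannyDowling m a n ((m : ℝ) * x) =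
      (m : ℝ) ^ n * Polynomial.aeval (-a / (m : ℝ)) (Polynomial.bernoulli n) := by
  have hm0 : (m : ℝ) ≠ 0 := Nat.cast_ne_zero.mpr hm.ne'
  set y : ℝ := -a / m with hy
  have h1 : ∀ x : ℝ, ncTannyDowling m a n ((m : ℝ) * x)
      = ∑ k ∈ range (n + 1),
          ((m : ℝ) ^ n * (fwdDiff 1)^[k] (fun t : ℝ => t ^ n) y) * x ^ k := by
    intro x
    rw [ncTannyDowling]
    apply Finset.sum_congr rfl
    intro k _
    rw [ncWhitney, fwdDiff_iter_pow_eq, mul_pow]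
    have hfac : (Nat.factorial k : ℝ) ≠ 0 := Nat.cast_ne_zero.mpr (Nat.factorial_ne_zero k)
    have hmk : (m : ℝ) ^ k ≠ 0 := pow_ne_zero _ hm0
    have hterm : ∀ j ∈ range (k + 1),
        (-1 : ℝ) ^ (k - j) * (Nat.choose k j : ℝ) * ((m : ℝ) * j - a) ^ n
        = (m : ℝ) ^ n * ((-1 : ℝ) ^ (k - j) * (Nat.choose k j : ℝ) * (y + j) ^ n) := by
      intro j _
      have hmy : (m : ℝ) * j - a = (m : ℝ) * (y + j) := by
        rw [hy]
        field_simp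
        ring
      rw [hmy, mul_pow]
      ring
    rw [Finset.sum_congr rfl hterm, ← Finset.mul_sum]
    field_simp
  rw [intervalIntegral.integral_congr (fun x _ => h1 x)]
  rw [intervalIntegral.integral_finset_sum (fun k _ => by
    apply Continuous.intervalIntegrable; continuity)]
  have h2 : ∀ k ∈ range (n + 1),
      (∫ x in (-1 : ℝ)..0, ((m : ℝ) ^ n * (fwdDiff 1)^[k] (fun t : ℝ => t ^ n) y) * x ^ k)
      = (m : ℝ) ^ n * (((-1 : ℝ) ^ k / (k + 1)) * (fwdDiff 1)^[k] (fun t : ℝ => t ^ n) y) := by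
    intro k _
    rw [intervalIntegral.integral_const_mul, integral_pow]
    have hodd : ((0 : ℝ) ^ (k + 1) - (-1 : ℝ) ^ (k + 1)) / ((k : ℝ) + 1)
        = (-1 : ℝ) ^ k / ((k : ℝ) + 1) := by
      rw [zero_pow (Nat.succ_ne_zero k), pow_succ]
      ring
    push_cast
    rw [hodd]
    ring
  rw [Finset.sum_congr rfl h2, ← Finset.mul_sum]
  rw [show (∑ k ∈ range (n + 1),
      ((-1 : ℝ) ^ k / (k + 1)) * (fwdDiff 1)^[k] (fun t : ℝ => t ^ n) y) = Tfun n y from rfl]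
  rw [Tfun_eq_bernoulli]
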